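/- Fix 0 ≤ p < 1. Let L : ℕ → ℝ satisfy L(0) = 0 and, for all n ≥ 1, L(n) = 1 + p·L(n−1) + ((1−p)/H_n)·Σ_{k=1}^{n} (1/k)·L(k−1). Define h_0 = 0 and h_k = 1/(k·H_k) for k ≥ 1. Then for all n ≥ 1, L(n) − L(n−1) = h_n + Σ_{k=1}^{n} p^k · (Π_{j=0}^{k−1} (1 − h_{n−j})) · h_{n−k}. -/

import Mathlib

open Finset

/-- The `n`-th harmonic number `H_n = ∑_{k=1}^n 1/k`, with `H 0 = 0`. -/
noncomputable def H (n : ℕ) : ℝ := ∑ k ∈ Finset.Icc 1 n, (1 : ℝ) / k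

/-- `h 0 = 0` and `h k = 1/(k·H_k)` for `k ≥ 1`. -/
noncomputable def h (k : ℕ) : ℝ := if k = 0 then 0 else 1 / ((k : ℝ) * H k)

lemma H_pos {n : ℕ} (hn : 1 ≤ n) : 0 < H n := by
  unfold H
  refine Finset.sum_pos (fun k hk => ?_) ⟨1, by simp [hn]⟩
  simp only [Finset.mem_Icc] at hk
  have : (0:ℝ) < k := by exact_mod_cast Nat.lt_of_lt_of_le Nat.zero_lt_one hk.1
  positivity

lemma H_succ (n : ℕ) : H (n+1) = H n + 1/(n+1) := by
  unfold H
  rw [Finset.sum_Icc_succ_top (by omega : 1 ≤ n+1)]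
  push_cast; ring

lemma shift (p : ℝ) (n : ℕ) :
    ∑ k ∈ Finset.Icc 1 (n+1), p ^ k * (∏ j ∈ Finset.range k, (1 - h (n+1 - j))) * h (n+1 - k)
    = p * (1 - h (n+1)) *
      (h n + ∑ k ∈ Finset.Icc 1 n, p ^ k * (∏ j ∈ Finset.range k, (1 - h (n - j))) * h (n - k)) := by
  rw [← Finset.Ico_add_one_right_eq_Icc, ← Finset.Ico_add_one_right_eq_Icc, Finset.sum_Ico_eq_sum_range,
    Finset.sum_Ico_eq_sum_range]
  have hprod : ∀ i : ℕ, ∏ j ∈ Finset.range (1+i), (1 - h (n+1 - j))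
      = (∏ j ∈ Finset.range i, (1 - h (n - j))) * (1 - h (n+1)) := by
    intro i
    rw [show 1+i = i+1 from by omega, Finset.prod_range_succ']
    simp only [Nat.sub_zero]
    congr 1
    exact Finset.prod_congr rfl fun j _ => by rw [show n+1-(j+1) = n - j from by omega]
  have hterm : ∀ i : ℕ, p ^ (1+i) * (∏ j ∈ Finset.range (1+i), (1 - h (n+1 - j))) * h (n+1 - (1+i))
      = (1 - h (n+1)) * (p ^ (1+i) * (∏ j ∈ Finset.range i, (1 - h (n - j))) * h (n - i)) := by
    intro i
    rw [hprod, show n+1-(1+i) = n - i from by omega]; ring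
  rw [show n+1+1-1 = n+1 from rfl, show n+1-1 = n from rfl,
    Finset.sum_congr rfl fun i _ => hterm i, Finset.sum_range_succ']
  simp only [Nat.sub_zero, pow_zero, Finset.range_zero, Finset.prod_empty]
  have : ∀ i ∈ Finset.range n, (1 - h (n+1)) * (p ^ (1+(i+1)) * (∏ j ∈ Finset.range (i+1), (1 - h (n - j))) * h (n - (i+1)))
      = p * (1 - h (n+1)) * (p ^ (1+i) * (∏ j ∈ Finset.range (1+i), (1 - h (n - j))) * h (n - (1+i))) := by
    intro i _
    rw [show 1+i = i+1 from by omega]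
    ring
  rw [Finset.sum_congr rfl this, ← Finset.mul_sum]
  ring

theorem stmt_17 (p : ℝ) (hp0 : 0 ≤ p) (hp1 : p < 1) (L : ℕ → ℝ) (hL0 : L 0 = 0)
    (hrec : ∀ n : ℕ, 1 ≤ n →
      L n = 1 + p * L (n - 1) +
        ((1 - p) / H n) * ∑ k ∈ Finset.Icc 1 n, (1 / (k : ℝ)) * L (k - 1)) :
    ∀ n : ℕ, 1 ≤ n →
      L n - L (n - 1) =
        h n + ∑ k ∈ Finset.Icc 1 n,
          p ^ k * (∏ j ∈ Finset.range k, (1 - h (n - j))) * h (n - k) := by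
  intro n hn
  induction n, hn using Nat.le_induction with
  | base =>
    have h1 := hrec 1 le_rfl
    have hh : H 1 = 1 := by unfold H; simp
    simp [Finset.Icc_self, Finset.sum_singleton, h, hh, hL0] at h1 ⊢
    simp [h1]
  | succ n hn ih =>
    have hHn : (0:ℝ) < H n := H_pos hn
    have hHn1 : (0:ℝ) < H (n+1) := H_pos (by omega)
    have hN : (0:ℝ) < (n:ℝ) + 1 := by positivity
    have e1 := hrec (n+1) (by omega)
    have e2 := hrec n hn
    rw [show (n:ℕ)+1-1 = n from rfl] at e1 ⊢
    rw [shift p n, ← ih]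
    have hsplit : ∑ k ∈ Finset.Icc 1 (n+1), (1 / (k : ℝ)) * L (k - 1)
        = (∑ k ∈ Finset.Icc 1 n, (1 / (k : ℝ)) * L (k - 1)) + (1/((n:ℝ)+1)) * L n := by
      rw [Finset.sum_Icc_succ_top (by omega : 1 ≤ n+1)]
      push_cast; ring
    rw [hsplit] at e1
    have hH : H (n+1) = H n + 1/((n:ℝ)+1) := by first
      | (rw [H_succ]; push_cast; ring)
      | rw [H_succ]
    have hh1 : h (n+1) = 1 / (((n:ℝ)+1) * H (n+1)) := by
      simp [h]
    set S := ∑ k ∈ Finset.Icc 1 n, (1 / (k : ℝ)) * L (k - 1) with hS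
    rw [hh1, hH] at *
    field_simp at e1 e2 ⊢
    refine mul_right_cancel₀ hN.ne' ?_
    linear_combination ((n:ℝ)+1) * (e1 - ((n:ℝ)+1) * e2)
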